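/- Let h(S) = (Σ_{i∈S} a_i)/(b0 + Σ_{i∈S} b_i) with b0 > 0, a_i ≥ 0, b_i > 0, and suppose for every S ⊆ N and distinct i, j ∉ S the inequality h(S∪{i}) + h(S∪{j}) ≤ a_i/b_i + a_j/b_j holds. Then for every S ⊆ T ⊆ N and every i ∉ T: h(T∪{i}) − h(T) ≤ h(S∪{i}) − h(S) (the diminishing-returns form of submodularity). -/
import Mathlib

lemma frac_key_16 (A B ai aj x y : ℝ) (hB : 0 < B) (hx : 0 < x) (hy : 0 < y)
    (hC : (A + ai) / (B + x) + (A + aj) / (B + y) ≤ ai / x + aj / y) :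
    (A + ai + aj) / (B + x + y) + A / B ≤ (A + ai) / (B + x) + (A + aj) / (B + y) := by
  have hbx : 0 < B + x := by linarith
  have hby : 0 < B + y := by linarith
  have hbxy : 0 < B + x + y := by linarith
  have h1 : ((A + ai) * (B + y) + (A + aj) * (B + x)) * (x * y) ≤
      (ai * y + aj * x) * ((B + x) * (B + y)) := by
    rw [div_add_div _ _ hbx.ne' hby.ne', div_add_div _ _ hx.ne' hy.ne',
      div_le_div_iff₀ (by positivity) (by positivity)] at hC
    nlinarith [hC]
  rw [div_add_div _ _ hbxy.ne' hB.ne', div_add_div _ _ hbx.ne' hby.ne',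
    div_le_div_iff₀ (by positivity) (by positivity)]
  nlinarith [h1]

theorem stmt_16 {ι : Type*} [DecidableEq ι] (N : Finset ι) (a b : ι → ℝ) (b0 : ℝ)
    (hb0 : 0 < b0) (ha : ∀ i ∈ N, 0 ≤ a i) (hb : ∀ i ∈ N, 0 < b i)
    (h : Finset ι → ℝ)
    (hdef : ∀ S : Finset ι, h S = (∑ i ∈ S, a i) / (b0 + ∑ i ∈ S, b i))
    (hcert : ∀ S : Finset ι, S ⊆ N → ∀ i ∈ N, ∀ j ∈ N, i ∉ S → j ∉ S → i ≠ j →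
      h (insert i S) + h (insert j S) ≤ a i / b i + a j / b j) :
    ∀ S T : Finset ι, S ⊆ T → T ⊆ N → ∀ i ∈ N, i ∉ T →
      h (insert i T) - h T ≤ h (insert i S) - h S := by
  -- exchange inequality
  have exch : ∀ U : Finset ι, U ⊆ N → ∀ i ∈ N, ∀ j ∈ N, i ∉ U → j ∉ U → i ≠ j →
      h (insert j (insert i U)) + h U ≤ h (insert i U) + h (insert j U) := by
    intro U hUN i hiN j hjN hiU hjU hij
    have hjI : j ∉ insert i U := by
      simp [Finset.mem_insert, hij.symm, hjU]
    have hBpos : 0 < b0 + ∑ x ∈ U, b x := by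
      have : (0:ℝ) ≤ ∑ x ∈ U, b x :=
        Finset.sum_nonneg fun x hx => (hb x (hUN hx)).le
      linarith
    have hbi : 0 < b i := hb i hiN
    have hbj : 0 < b j := hb j hjN
    have e1 : h (insert i U) = ((∑ x ∈ U, a x) + a i) / ((b0 + ∑ x ∈ U, b x) + b i) := by
      rw [hdef, Finset.sum_insert hiU, Finset.sum_insert hiU]; ring_nf
    have e2 : h (insert j U) = ((∑ x ∈ U, a x) + a j) / ((b0 + ∑ x ∈ U, b x) + b j) := by
      rw [hdef, Finset.sum_insert hjU, Finset.sum_insert hjU]; ring_nf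
    have e3 : h (insert j (insert i U)) =
        ((∑ x ∈ U, a x) + a i + a j) / ((b0 + ∑ x ∈ U, b x) + b i + b j) := by
      rw [hdef, Finset.sum_insert hjI, Finset.sum_insert hiU,
        Finset.sum_insert hjI, Finset.sum_insert hiU]; ring_nf
    have hC := hcert U hUN i hiN j hjN hiU hjU hij
    rw [e1, e2] at hC
    rw [e1, e2, e3, hdef]
    exact frac_key_16 _ _ _ _ _ _ hBpos hbi hbj hC
  intro S T hST hTN i hiN hiT
  have main : ∀ n : ℕ, ∀ T : Finset ι, (T \ S).card = n → S ⊆ T → T ⊆ N → i ∉ T →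
      h (insert i T) - h T ≤ h (insert i S) - h S := by
    intro n
    induction n with
    | zero =>
      intro T hc hST hTN hiT
      have : T = S := by
        apply Finset.Subset.antisymm _ hST
        intro x hx
        by_contra hxS
        have : x ∈ T \ S := Finset.mem_sdiff.mpr ⟨hx, hxS⟩
        rw [Finset.card_eq_zero.mp hc] at this
        simp at this
      rw [this]
    | succ n ih =>
      intro T hc hST hTN hiT
      obtain ⟨j, hj⟩ : (T \ S).Nonempty := by
        rw [← Finset.card_pos, hc]; omega
      have hjT : j ∈ T := (Finset.mem_sdiff.mp hj).1
      have hjS : j ∉ S := (Finset.mem_sdiff.mp hj).2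
      set T' := T.erase j with hT'
      have hST' : S ⊆ T' := fun x hx =>
        Finset.mem_erase.mpr ⟨fun hxj => hjS (hxj ▸ hx), hST hx⟩
      have hT'N : T' ⊆ N := (Finset.erase_subset _ _).trans hTN
      have hiT' : i ∉ T' := fun hmem => hiT (Finset.mem_of_mem_erase hmem)
      have hjT' : j ∉ T' := Finset.notMem_erase _ _
      have hij : i ≠ j := fun hij => hiT (hij ▸ hjT)
      have hcard : (T' \ S).card = n := by
        have : T' \ S = (T \ S).erase j := by
          ext x; simp [hT', Finset.mem_erase, Finset.mem_sdiff]; tauto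
        rw [this, Finset.card_erase_of_mem hj, hc]; omega
      have hTeq : T = insert j T' := (Finset.insert_erase hjT).symm
      have hstep : h (insert i T) - h T ≤ h (insert i T') - h T' := by
        have hex := exch T' hT'N i hiN j (hTN hjT) hiT' hjT' hij
        rw [hTeq, Finset.insert_comm]
        linarith
      have := ih T' hcard hST' hT'N hiT'
      linarith
  exact main (T \ S).card T rfl hST hTN hiT
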